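/- For every integer l ≥ 2, one has χ_{l,l} = −Σ_{m=1}^{l} (−1)^m·m^{l−1}·Σ_{j=m}^{l} C(l,j). -/

import Mathlib

open Finset

/-- The coefficient `σ_{l,j}` from the paper (there written `σ_{l,i+1}` with `j = i+1`):
`σ_{l,j} = (-1)^{j-1} Σ_{p=0}^{j-2} (-1)^{p+1} Σ_{q=0}^{p+1} (-1)^q C(j,q)(p+1-q)^{l-1}`. -/
def sigmaCoeff (l j : ℕ) : ℚ :=
  (-1) ^ (j - 1) * ∑ p ∈ Finset.range (j - 1), (-1 : ℚ) ^ (p + 1) *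
    ∑ q ∈ Finset.range (p + 2), (-1 : ℚ) ^ q * (j.choose q : ℚ) * ((p + 1 - q : ℕ) : ℚ) ^ (l - 1)

/-- The coefficient `χ_{l,j}` from the paper (there written `χ_{l,i+1}` with `j = i+1`):
`χ_{l,j} = (-1)^{j-l} Σ_{k=1}^{j-1} ((2^{j-1}-2^{j-1-k})/(k+1)) Σ_{m=0}^{k+1} (-1)^m C(k+1,m) m^l`. -/
def chiCoeff (l j : ℕ) : ℚ :=
  (-1) ^ (j - l) * ∑ k ∈ Finset.Icc 1 (j - 1),
    ((2 ^ (j - 1) - 2 ^ (j - 1 - k) : ℚ) / ((k : ℚ) + 1)) *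
      ∑ m ∈ Finset.range (k + 2), (-1 : ℚ) ^ m * ((k + 1).choose m : ℚ) * (m : ℚ) ^ l

lemma sum_Icc_shift {M : Type*} [AddCommMonoid M] (f : ℕ → M) (a b : ℕ) :
    ∑ j ∈ Icc (a+1) (b+1), f j = ∑ j ∈ Icc a b, f (j+1) := by
  rw [← Finset.map_add_right_Icc, Finset.sum_map]
  rfl

lemma sum_Icc_bot {M : Type*} [AddCommMonoid M] (f : ℕ → M) {a b : ℕ} (h : a ≤ b) :
    ∑ j ∈ Icc a b, f j = f a + ∑ j ∈ Icc (a+1) b, f j := by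
  rw [show Icc a b = insert a (Icc (a+1) b) by ext x; simp; omega,
    Finset.sum_insert (by simp)]

lemma sum_two_pow_choose (N n : ℕ) :
    ∑ k ∈ range (N+1), 2^(N-k) * k.choose n = ∑ j ∈ Icc (n+1) (N+1), (N+1).choose j := by
  induction N with
  | zero =>
    rcases n with _|n <;> simp [Finset.Icc_self]
  | succ N ih =>
    rw [Finset.sum_range_succ, Nat.sub_self, pow_zero, one_mul]
    have hL : ∑ k ∈ range (N+1), 2^(N+1-k) * k.choose n
        = 2 * ∑ k ∈ range (N+1), 2^(N-k) * k.choose n := by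
      rw [Finset.mul_sum]
      refine Finset.sum_congr rfl fun k hk => ?_
      have hk' : k ≤ N := by simpa [Nat.lt_succ_iff] using hk
      rw [show N + 1 - k = (N - k) + 1 by omega, pow_succ]
      ring
    have hR : ∑ j ∈ Icc (n+1) (N+1+1), (N+1+1).choose j
        = 2 * ∑ j ∈ Icc (n+1) (N+1), (N+1).choose j + (N+1).choose n := by
      rw [sum_Icc_shift (fun j => (N+1+1).choose j) n (N+1)]
      have hP : ∑ j ∈ Icc n (N+1), (N+1+1).choose (j+1)
          = ∑ j ∈ Icc n (N+1), ((N+1).choose j + (N+1).choose (j+1)) := by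
        refine Finset.sum_congr rfl fun j hj => ?_
        rw [Nat.choose_succ_succ]
      rw [hP, Finset.sum_add_distrib]
      rcases le_or_gt n (N+1) with h | h
      · rw [sum_Icc_bot _ h]
        have h2 : ∑ j ∈ Icc n (N+1), (N+1).choose (j+1)
            = ∑ j ∈ Icc (n+1) (N+1), (N+1).choose j + (N+1).choose (N+1+1) := by
          rw [← sum_Icc_shift (fun j => (N+1).choose j) n (N+1)]
          exact Finset.sum_Icc_succ_top (by omega) _
        rw [h2, Nat.choose_succ_self, add_zero]
        ring
      · rw [Finset.Icc_eq_empty (by omega), Finset.Icc_eq_empty (by omega)]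
        simp [Nat.choose_eq_zero_of_lt (by omega : N + 1 < n)]
    rw [hL, ih, hR]

lemma alt_sum_choose_pow : ∀ (j n : ℕ), j < n →
    ∑ m ∈ range (n+1), (-1:ℚ)^m * (n.choose m : ℚ) * (m:ℚ)^j = 0 := by
  intro j
  induction j using Nat.strong_induction_on with
  | _ j IH =>
    intro n hjn
    obtain ⟨n', rfl⟩ : ∃ n', n = n' + 1 := ⟨n - 1, by omega⟩
    rcases j with _|j'
    · have h0 := add_pow (-1:ℚ) 1 (n'+1)
      simp only [neg_add_cancel, one_pow, mul_one, pow_succ] at h0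
      simpa [zero_pow, mul_comm] using h0.symm
    · rw [Finset.sum_range_succ']
      simp only [Nat.cast_zero, zero_pow (by omega : j' + 1 ≠ 0), mul_zero, add_zero]
      have hterm : ∀ i ∈ range (n'+1), (-1:ℚ)^(i+1) * ((n'+1).choose (i+1) : ℚ) * ((i+1 : ℕ):ℚ)^(j'+1)
          = ∑ t ∈ range (j'+1), (-((n':ℚ)+1)) * (j'.choose t : ℚ) * ((-1:ℚ)^i * (n'.choose i : ℚ) * (i:ℚ)^t) := by
        intro i _
        have hch : (((n'+1).choose (i+1)) : ℚ) * ((i:ℚ)+1) = ((n':ℚ)+1) * (n'.choose i : ℚ) := by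
          have h := Nat.add_one_mul_choose_eq n' i
          have h' : ((n'.succ * n'.choose i : ℕ) : ℚ) = ((n'.succ.choose i.succ * i.succ : ℕ) : ℚ) := by
            rw [h]
          push_cast at h'
          linarith
        have hbin : ((i:ℚ)+1)^(j') = ∑ t ∈ range (j'+1), ((i:ℚ))^t * (j'.choose t : ℚ) := by
          simpa using add_pow (i:ℚ) 1 j'
        push_cast
        calc (-1:ℚ)^(i+1) * (((n'+1).choose (i+1)):ℚ) * ((i:ℚ)+1)^(j'+1)
            = ((-1:ℚ)^i * (-1)) * ((((n'+1).choose (i+1)):ℚ) * ((i:ℚ)+1)) * ((i:ℚ)+1)^(j') := by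
              ring
          _ = ((-1:ℚ)^i * (-1)) * (((n':ℚ)+1) * ((n'.choose i):ℚ)) *
                (∑ t ∈ range (j'+1), (i:ℚ)^t * (j'.choose t:ℚ)) := by rw [hch, hbin]
          _ = ∑ t ∈ range (j'+1), (-((n':ℚ)+1)) * (j'.choose t : ℚ) * ((-1:ℚ)^i * (n'.choose i : ℚ) * (i:ℚ)^t) := by
              rw [Finset.mul_sum]
              exact Finset.sum_congr rfl fun t _ => by ring
      rw [Finset.sum_congr rfl hterm, Finset.sum_comm]
      refine Finset.sum_eq_zero fun t ht => ?_
      have htj : t < j' + 1 := Finset.mem_range.mp ht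
      rw [← Finset.mul_sum, IH t htj n' (by omega), mul_zero]

lemma key_identity (N n : ℕ) :
    ∑ k ∈ Icc 1 N, ((2:ℚ)^N - 2^(N-k)) * (k.choose n : ℚ)
      = 2^N * ((N+1).choose (n+1) : ℚ) - ∑ j ∈ Icc (n+1) (N+1), ((N+1).choose j : ℚ) := by
  have hext : ∑ k ∈ Icc 1 N, ((2:ℚ)^N - 2^(N-k)) * (k.choose n : ℚ)
      = ∑ k ∈ range (N+1), ((2:ℚ)^N - 2^(N-k)) * (k.choose n : ℚ) := by
    refine Finset.sum_subset (fun x hx => ?_) (fun x hx hx' => ?_)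
    · simp only [Finset.mem_Icc] at hx; simp only [Finset.mem_range]; omega
    · have : x = 0 := by
        simp only [Finset.mem_Icc] at hx'; simp only [Finset.mem_range] at hx; omega
      subst this; simp
  rw [hext]
  have hsplit : ∑ k ∈ range (N+1), ((2:ℚ)^N - 2^(N-k)) * (k.choose n : ℚ)
      = 2^N * (∑ k ∈ range (N+1), (k.choose n : ℚ))
        - ∑ k ∈ range (N+1), (2:ℚ)^(N-k) * (k.choose n : ℚ) := by
    rw [Finset.mul_sum, ← Finset.sum_sub_distrib]
    exact Finset.sum_congr rfl fun k _ => by ring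
  rw [hsplit]
  have h1 : (∑ k ∈ range (N+1), (k.choose n : ℚ)) = ((N+1).choose (n+1) : ℚ) := by
    have hN : ∑ k ∈ range (N+1), k.choose n = (N+1).choose (n+1) := by
      rw [← Nat.sum_Icc_choose]
      refine (Finset.sum_subset (fun x hx => ?_) (fun x hx hx' => ?_)).symm
      · simp only [Finset.mem_Icc] at hx; simp only [Finset.mem_range]; omega
      · simp only [Finset.mem_Icc] at hx'; simp only [Finset.mem_range] at hx
        exact Nat.choose_eq_zero_of_lt (by omega)
    exact_mod_cast congrArg (Nat.cast (R := ℚ)) hN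
  have h2 : (∑ k ∈ range (N+1), (2:ℚ)^(N-k) * (k.choose n : ℚ))
      = ∑ j ∈ Icc (n+1) (N+1), ((N+1).choose j : ℚ) := by
    have := congrArg (Nat.cast (R := ℚ)) (sum_two_pow_choose N n)
    push_cast at this
    exact this
  rw [h1, h2]

/-- Closed form for `χ_{l,l}` obtained in the proof of Lemma `sigeqchi`: for `l ≥ 2`,
`χ_{l,l} = - Σ_{m=1}^{l} (-1)^m m^{l-1} Σ_{j=m}^{l} C(l,j)`. -/
theorem chi_ll_closed_form (l : ℕ) (hl : 2 ≤ l) :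
    chiCoeff l l = - ∑ m ∈ Finset.Icc 1 l, (-1 : ℚ) ^ m * (m : ℚ) ^ (l - 1) *
      ∑ j ∈ Finset.Icc m l, (l.choose j : ℚ) := by
  unfold chiCoeff
  rw [Nat.sub_self, pow_zero, one_mul]
  -- Step 1: divide termwise and extend the inner sum to `range (l+1)`
  have step1 : ∀ k ∈ Icc 1 (l-1),
      ((2 ^ (l - 1) - 2 ^ (l - 1 - k) : ℚ) / ((k : ℚ) + 1)) *
        ∑ m ∈ range (k+2), (-1:ℚ)^m * ((k+1).choose m : ℚ) * (m:ℚ)^l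
      = ∑ m ∈ range (l+1), ((2:ℚ)^(l-1) - 2^(l-1-k)) * ((-1:ℚ)^m * (k.choose (m-1) : ℚ) * (m:ℚ)^(l-1)) := by
    intro k hk
    have hk' : k ≤ l - 1 := (Finset.mem_Icc.mp hk).2
    have hc : ((k:ℚ)+1) ≠ 0 := by positivity
    have hdiv : ((2 ^ (l - 1) - 2 ^ (l - 1 - k) : ℚ) / ((k : ℚ) + 1)) *
        ∑ m ∈ range (k+2), (-1:ℚ)^m * ((k+1).choose m : ℚ) * (m:ℚ)^l
      = ∑ m ∈ range (k+2), ((2:ℚ)^(l-1) - 2^(l-1-k)) * ((-1:ℚ)^m * (k.choose (m-1) : ℚ) * (m:ℚ)^(l-1)) := by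
      rw [Finset.mul_sum]
      refine Finset.sum_congr rfl fun m _ => ?_
      have hf : (-1:ℚ)^m * ((k+1).choose m : ℚ) * (m:ℚ)^l
          = ((k:ℚ)+1) * ((-1:ℚ)^m * (k.choose (m-1) : ℚ) * (m:ℚ)^(l-1)) := by
        rcases m with _|m'
        · simp [zero_pow (by omega : l ≠ 0), zero_pow (by omega : l - 1 ≠ 0)]
        · have hch : (((k+1).choose (m'+1)) : ℚ) * ((m':ℚ)+1) = ((k:ℚ)+1) * (k.choose m' : ℚ) := by
            have h := Nat.add_one_mul_choose_eq k m'
            have h' : ((k.succ * k.choose m' : ℕ) : ℚ) = ((k.succ.choose m'.succ * m'.succ : ℕ) : ℚ) := by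
              rw [h]
            push_cast at h'
            linarith
          have hpow : ((m'+1 : ℕ):ℚ)^l = ((m'+1 : ℕ):ℚ)^(l-1) * ((m':ℚ)+1) := by
            push_cast
            rw [← pow_succ]
            congr 1
            omega
          rw [hpow, Nat.add_sub_cancel]
          push_cast
          calc (-1:ℚ)^(m'+1) * (((k+1).choose (m'+1)):ℚ) * (((m':ℚ)+1)^(l-1) * ((m':ℚ)+1))
              = (-1:ℚ)^(m'+1) * ((((k+1).choose (m'+1)):ℚ) * ((m':ℚ)+1)) * ((m':ℚ)+1)^(l-1) := by ring
            _ = (-1:ℚ)^(m'+1) * (((k:ℚ)+1) * (k.choose m' : ℚ)) * ((m':ℚ)+1)^(l-1) := by rw [hch]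
            _ = ((k:ℚ)+1) * ((-1:ℚ)^(m'+1) * (k.choose m' : ℚ) * ((m':ℚ)+1)^(l-1)) := by ring
      rw [hf]
      field_simp
    rw [hdiv]
    refine Finset.sum_subset (fun x hx => ?_) (fun x hx hx' => ?_)
    · simp only [Finset.mem_range] at hx ⊢; omega
    · simp only [Finset.mem_range] at hx hx'
      have : k < x - 1 := by omega
      rw [Nat.choose_eq_zero_of_lt this]
      simp
  rw [Finset.sum_congr rfl step1, Finset.sum_comm]
  -- Step 2: pull out the `m`-factors
  have step2 : ∀ m ∈ range (l+1),
      ∑ k ∈ Icc 1 (l-1), ((2:ℚ)^(l-1) - 2^(l-1-k)) * ((-1:ℚ)^m * (k.choose (m-1) : ℚ) * (m:ℚ)^(l-1))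
      = (-1:ℚ)^m * (m:ℚ)^(l-1) * ∑ k ∈ Icc 1 (l-1), ((2:ℚ)^(l-1) - 2^(l-1-k)) * (k.choose (m-1) : ℚ) := by
    intro m _
    rw [Finset.mul_sum]
    exact Finset.sum_congr rfl fun k _ => by ring
  rw [Finset.sum_congr rfl step2]
  -- Step 3: restrict to `Icc 1 l` (the `m = 0` term vanishes)
  have step3 : ∑ m ∈ range (l+1), (-1:ℚ)^m * (m:ℚ)^(l-1) *
        ∑ k ∈ Icc 1 (l-1), ((2:ℚ)^(l-1) - 2^(l-1-k)) * (k.choose (m-1) : ℚ)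
      = ∑ m ∈ Icc 1 l, (-1:ℚ)^m * (m:ℚ)^(l-1) *
        ∑ k ∈ Icc 1 (l-1), ((2:ℚ)^(l-1) - 2^(l-1-k)) * (k.choose (m-1) : ℚ) := by
    refine (Finset.sum_subset (fun x hx => ?_) (fun x hx hx' => ?_)).symm
    · simp only [Finset.mem_Icc] at hx; simp only [Finset.mem_range]; omega
    · have : x = 0 := by
        simp only [Finset.mem_Icc] at hx'; simp only [Finset.mem_range] at hx; omega
      subst this
      simp [zero_pow (by omega : l - 1 ≠ 0)]
  rw [step3]
  -- Step 4: apply the key identity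
  have step4 : ∀ m ∈ Icc 1 l,
      (-1:ℚ)^m * (m:ℚ)^(l-1) * ∑ k ∈ Icc 1 (l-1), ((2:ℚ)^(l-1) - 2^(l-1-k)) * (k.choose (m-1) : ℚ)
      = (-1:ℚ)^m * (m:ℚ)^(l-1) * ((2:ℚ)^(l-1) * (l.choose m : ℚ))
        - (-1:ℚ)^m * (m:ℚ)^(l-1) * ∑ j ∈ Icc m l, (l.choose j : ℚ) := by
    intro m hm
    have hm1 : 1 ≤ m := (Finset.mem_Icc.mp hm).1
    have hkey := key_identity (l-1) (m-1)
    rw [show l - 1 + 1 = l by omega, show m - 1 + 1 = m by omega] at hkey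
    rw [hkey]
    ring
  rw [Finset.sum_congr rfl step4, Finset.sum_sub_distrib]
  -- Step 5: the first sum vanishes
  have step5 : ∑ m ∈ Icc 1 l, (-1:ℚ)^m * (m:ℚ)^(l-1) * ((2:ℚ)^(l-1) * (l.choose m : ℚ)) = 0 := by
    have hext : ∑ m ∈ Icc 1 l, (-1:ℚ)^m * (m:ℚ)^(l-1) * ((2:ℚ)^(l-1) * (l.choose m : ℚ))
        = ∑ m ∈ range (l+1), (-1:ℚ)^m * (m:ℚ)^(l-1) * ((2:ℚ)^(l-1) * (l.choose m : ℚ)) := by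
      refine Finset.sum_subset (fun x hx => ?_) (fun x hx hx' => ?_)
      · simp only [Finset.mem_Icc] at hx; simp only [Finset.mem_range]; omega
      · have : x = 0 := by
          simp only [Finset.mem_Icc] at hx'; simp only [Finset.mem_range] at hx; omega
        subst this
        simp [zero_pow (by omega : l - 1 ≠ 0)]
    rw [hext]
    have : ∑ m ∈ range (l+1), (-1:ℚ)^m * (m:ℚ)^(l-1) * ((2:ℚ)^(l-1) * (l.choose m : ℚ))
        = (2:ℚ)^(l-1) * ∑ m ∈ range (l+1), (-1:ℚ)^m * (l.choose m : ℚ) * (m:ℚ)^(l-1) := by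
      rw [Finset.mul_sum]
      exact Finset.sum_congr rfl fun m _ => by ring
    rw [this]
    obtain ⟨l', rfl⟩ : ∃ l', l = l' + 1 := ⟨l - 1, by omega⟩
    rw [alt_sum_choose_pow (l'+1-1) (l'+1) (by omega), mul_zero]
  rw [step5, zero_sub]
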